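/- In the Beltrami–Klein model of the hyperbolic plane with foci F₁ = (1,f,0), F₂ = (1,-f,0), 0 < f < 1, a proper point P = (1,x,y) with x²+y² < 1 satisfies d(P,F₁) + d(P,F₂) = 2a (with 2a > d(F₁,F₂)) only if x²/tanh²(a) + y²/(1 + 1/((f²-1)cosh²(a))) = 1. -/

import Mathlib

open Real

/-- Lorentzian bilinear form of signature (1,2) on coordinate triples. -/
def lor (u v : ℝ × ℝ × ℝ) : ℝ := -(u.1 * v.1) + u.2.1 * v.2.1 + u.2.2 * v.2.2

set_option maxHeartbeats 1000000 in
/-- A proper point of the Beltrami–Klein model whose hyperbolic distances to the foci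
`F₁ = (1,f,0)`, `F₂ = (1,-f,0)` sum to `2a` (with `2a` larger than the distance of the foci)
lies on the ellipse `x²/tanh²a + y²/(1 + 1/((f²-1)cosh²a)) = 1`. -/
theorem stmt_3 (f a x y d₁ d₂ dF : ℝ)
    (hf : 0 < f) (hf' : f < 1) (hP : x ^ 2 + y ^ 2 < 1)
    (hd₁ : 0 ≤ d₁) (hd₂ : 0 ≤ d₂) (hdF : 0 ≤ dF)
    (h₁ : Real.cosh d₁ = -(lor (1, x, y) (1, f, 0)) /
        Real.sqrt (lor (1, x, y) (1, x, y) * lor (1, f, 0) (1, f, 0)))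
    (h₂ : Real.cosh d₂ = -(lor (1, x, y) (1, -f, 0)) /
        Real.sqrt (lor (1, x, y) (1, x, y) * lor (1, -f, 0) (1, -f, 0)))
    (hF : Real.cosh dF = -(lor (1, f, 0) (1, -f, 0)) /
        Real.sqrt (lor (1, f, 0) (1, f, 0) * lor (1, -f, 0) (1, -f, 0)))
    (hsum : d₁ + d₂ = 2 * a) (ha : 2 * a > dF) :
    x ^ 2 / Real.tanh a ^ 2 +
      y ^ 2 / (1 + 1 / ((f ^ 2 - 1) * Real.cosh a ^ 2)) = 1 := by
  have hQ : (0:ℝ) < 1 - x ^ 2 - y ^ 2 := by nlinarith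
  have hk : (0:ℝ) < 1 - f ^ 2 := by nlinarith
  set c : ℝ := Real.cosh a with hc
  -- distance between foci
  have hF' : Real.cosh dF = (1 + f ^ 2) / (1 - f ^ 2) := by
    rw [hF, show lor (1, f, 0) (1, f, 0) * lor (1, -f, 0) (1, -f, 0) = (1 - f ^ 2) ^ 2 by
      simp [lor]; ring, Real.sqrt_sq hk.le,
      show -(lor (1, f, 0) (1, -f, 0)) = 1 + f ^ 2 by simp [lor]; ring]
  -- the common square root
  set s : ℝ := Real.sqrt ((1 - x ^ 2 - y ^ 2) * (1 - f ^ 2)) with hsdef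
  have hspos : 0 < s := Real.sqrt_pos.mpr (by positivity)
  have hs2 : s ^ 2 = (1 - x ^ 2 - y ^ 2) * (1 - f ^ 2) := Real.sq_sqrt (by positivity)
  have h₁' : Real.cosh d₁ * s = 1 - f * x := by
    rw [h₁, show lor (1, x, y) (1, x, y) * lor (1, f, 0) (1, f, 0)
        = (1 - x ^ 2 - y ^ 2) * (1 - f ^ 2) by simp [lor]; ring,
      show -(lor (1, x, y) (1, f, 0)) = 1 - f * x by simp [lor]; ring, ← hsdef]
    field_simp
  have h₂' : Real.cosh d₂ * s = 1 + f * x := by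
    rw [h₂, show lor (1, x, y) (1, x, y) * lor (1, -f, 0) (1, -f, 0)
        = (1 - x ^ 2 - y ^ 2) * (1 - f ^ 2) by simp [lor]; ring,
      show -(lor (1, x, y) (1, -f, 0)) = 1 + f * x by simp [lor]; ring, ← hsdef]
    field_simp
  set u : ℝ := s * Real.sinh d₁ with hu
  set v : ℝ := s * Real.sinh d₂ with hv
  have hu0 : 0 ≤ u := mul_nonneg hspos.le (Real.sinh_nonneg_iff.mpr hd₁)
  have hv0 : 0 ≤ v := mul_nonneg hspos.le (Real.sinh_nonneg_iff.mpr hd₂)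
  have hu2 : u ^ 2 = (x - f) ^ 2 + y ^ 2 * (1 - f ^ 2) := by
    have hs1 := Real.sinh_sq d₁
    linear_combination s ^ 2 * hs1 + (Real.cosh d₁ * s + (1 - f * x)) * h₁' - hs2
  have hv2 : v ^ 2 = (x + f) ^ 2 + y ^ 2 * (1 - f ^ 2) := by
    have hs1 := Real.sinh_sq d₂
    linear_combination s ^ 2 * hs1 + (Real.cosh d₂ * s + (1 + f * x)) * h₂' - hs2
  have hca : Real.cosh (2 * a) = Real.cosh d₁ * Real.cosh d₂ +
      Real.sinh d₁ * Real.sinh d₂ := by rw [← hsum, Real.cosh_add]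
  have huv : u * v = (1 - x ^ 2 - y ^ 2) * (1 - f ^ 2) * Real.cosh (2 * a)
      - (1 - f ^ 2 * x ^ 2) := by
    linear_combination (-(s ^ 2)) * hca + Real.cosh (2 * a) * hs2
      - (Real.cosh d₂ * s) * h₁' - (1 - f * x) * h₂'
  have hc2a : Real.cosh (2 * a) = 2 * c ^ 2 - 1 := by
    rw [hc, Real.cosh_two_mul, Real.sinh_sq]
    ring
  have hR : ((x - f) ^ 2 + y ^ 2 * (1 - f ^ 2)) * ((x + f) ^ 2 + y ^ 2 * (1 - f ^ 2))
      = ((1 - x ^ 2 - y ^ 2) * (1 - f ^ 2) * (2 * c ^ 2 - 1) - (1 - f ^ 2 * x ^ 2)) ^ 2 := by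
    rw [← hu2, ← hv2, ← hc2a, show u ^ 2 * v ^ 2 = (u * v) ^ 2 by ring, huv]
  -- inequalities
  have ha0 : 0 < a := by linarith
  have hc1 : 1 < c := by rw [hc]; exact Real.one_lt_cosh.mpr (ne_of_gt ha0)
  have hkc : 1 < (1 - f ^ 2) * c ^ 2 := by
    have hlt : Real.cosh dF < Real.cosh (2 * a) := by
      rw [Real.cosh_lt_cosh, abs_of_nonneg hdF, abs_of_nonneg (by linarith : (0:ℝ) ≤ 2 * a)]
      exact ha
    rw [hF', hc2a] at hlt
    rw [div_lt_iff₀ hk] at hlt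
    have hid : (2 * c ^ 2 - 1) * (1 - f ^ 2) = 2 * ((1 - f ^ 2) * c ^ 2) - (1 - f ^ 2) := by
      ring
    linarith
  -- the cleared ellipse equation
  have hL : x ^ 2 * c ^ 2 * ((1 - f ^ 2) * c ^ 2 - 1)
      + y ^ 2 * (1 - f ^ 2) * c ^ 2 * (c ^ 2 - 1)
      - (c ^ 2 - 1) * ((1 - f ^ 2) * c ^ 2 - 1) = 0 := by
    have h4 : (4 * (1 - f ^ 2) * (1 - x ^ 2 - y ^ 2)) *
        (x ^ 2 * c ^ 2 * ((1 - f ^ 2) * c ^ 2 - 1)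
          + y ^ 2 * (1 - f ^ 2) * c ^ 2 * (c ^ 2 - 1)
          - (c ^ 2 - 1) * ((1 - f ^ 2) * c ^ 2 - 1)) = 0 := by
      linear_combination hR
    have h5 : (4 * (1 - f ^ 2) * (1 - x ^ 2 - y ^ 2)) ≠ 0 := by positivity
    rcases mul_eq_zero.mp h4 with h | h
    · exact absurd h h5
    · exact h
  have ht : Real.tanh a ^ 2 = (c ^ 2 - 1) / c ^ 2 := by
    rw [Real.tanh_eq_sinh_div_cosh, div_pow, Real.sinh_sq, hc]
  have hcne : c ≠ 0 := by positivity
  have hfne : f ^ 2 - 1 ≠ 0 := by nlinarith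
  have hden : 1 + 1 / ((f ^ 2 - 1) * c ^ 2)
      = ((1 - f ^ 2) * c ^ 2 - 1) / ((1 - f ^ 2) * c ^ 2) := by
    field_simp
    ring
  rw [ht, hden]
  have h6 : c ^ 2 - 1 ≠ 0 := ne_of_gt (sub_pos.mpr (one_lt_pow₀ hc1 two_ne_zero))
  have h7 : (1 - f ^ 2) * c ^ 2 - 1 ≠ 0 := ne_of_gt (sub_pos.mpr hkc)
  rw [div_div_eq_mul_div, div_div_eq_mul_div, div_add_div _ _ h6 h7, div_eq_one_iff_eq (mul_ne_zero h6 h7)]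
  linear_combination hL
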